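/- For any σ, ρ ∈ S_n, the product π_σ · π̄_ρ in the 0-Hecke algebra H_n(0) is nonzero if and only if ℓ(σρ) = ℓ(σ) + ℓ(ρ), where π̄_i := π_i − 1 and π̄_ρ is defined via any reduced expression of ρ. -/

import Mathlib

/-- Index set `{1, …, n-1}` for the generators of `H_n(0)` and for the simple
transpositions of `S_n`. -/
def HIdx (n : ℕ) := {i : ℕ // 1 ≤ i ∧ i + 1 ≤ n}

/-- The defining relations of the 0-Hecke algebra `H_n(0)`:
`π_i² = π_i`, the braid relations, and commutation for `|i-j| ≥ 2`. -/
inductive HeckeRel (n : ℕ) :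
    FreeAlgebra ℂ (HIdx n) → FreeAlgebra ℂ (HIdx n) → Prop
  | idem (i : HIdx n) :
      HeckeRel n (FreeAlgebra.ι ℂ i * FreeAlgebra.ι ℂ i) (FreeAlgebra.ι ℂ i)
  | braid (i j : HIdx n) (h : i.1 + 1 = j.1) :
      HeckeRel n (FreeAlgebra.ι ℂ i * FreeAlgebra.ι ℂ j * FreeAlgebra.ι ℂ i)
        (FreeAlgebra.ι ℂ j * FreeAlgebra.ι ℂ i * FreeAlgebra.ι ℂ j)
  | comm (i j : HIdx n) (h : i.1 + 2 ≤ j.1) :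
      HeckeRel n (FreeAlgebra.ι ℂ i * FreeAlgebra.ι ℂ j)
        (FreeAlgebra.ι ℂ j * FreeAlgebra.ι ℂ i)

/-- The 0-Hecke algebra `H_n(0)`, presented by generators and relations. -/
abbrev Hecke0 (n : ℕ) := RingQuot (HeckeRel n)

/-- The generator `π_i` of `H_n(0)`. -/
def piGen (n : ℕ) (i : HIdx n) : Hecke0 n :=
  RingQuot.mkAlgHom ℂ (HeckeRel n) (FreeAlgebra.ι ℂ i)

/-- The permutation `s_{i₁} s_{i₂} ⋯ s_{i_p}` associated to a word, where
`s_i = (i, i+1)` acts on `ℕ`. -/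
def wordPerm (n : ℕ) (w : List (HIdx n)) : Equiv.Perm ℕ :=
  (w.map fun i => Equiv.swap i.1 (i.1 + 1)).prod

/-- `w` is a reduced expression for `σ`: it represents `σ` and has minimal length. -/
def IsRedWord (n : ℕ) (σ : Equiv.Perm ℕ) (w : List (HIdx n)) : Prop :=
  wordPerm n w = σ ∧ ∀ w' : List (HIdx n), wordPerm n w' = σ → w.length ≤ w'.length


/-- The element `π̄_i = π_i − 1` of `H_n(0)`. -/
def piBar (n : ℕ) (i : HIdx n) : Hecke0 n := piGen n i - 1


theorem Equiv.Perm.apply_inv_self {α : Type*} (f : Equiv.Perm α) (x : α) : f (f⁻¹ x) = x :=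
  f.apply_symm_apply x

theorem Equiv.Perm.inv_apply_self {α : Type*} (f : Equiv.Perm α) (x : α) : f⁻¹ (f x) = x :=
  f.symm_apply_apply x

namespace S10
open Finset Equiv

/-- the simple transposition -/
abbrev sw (i : ℕ) : Equiv.Perm ℕ := Equiv.swap i (i+1)

/-- supported in [1,n] -/
def Sup (n : ℕ) (σ : Equiv.Perm ℕ) : Prop := σ 0 = 0 ∧ ∀ x, n < x → σ x = x

/-- pair window -/
def P (n : ℕ) : Finset (ℕ × ℕ) :=
  (Finset.range (n+1) ×ˢ Finset.range (n+1)).filter fun p => p.1 < p.2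

/-- inversion number -/
def nInv (n : ℕ) (σ : Equiv.Perm ℕ) : ℕ :=
  ((P n).filter fun p => σ p.2 < σ p.1).card

lemma mem_P {n : ℕ} {p : ℕ × ℕ} : p ∈ P n ↔ p.1 ≤ n ∧ p.2 ≤ n ∧ p.1 < p.2 := by
  simp [P, Finset.mem_filter, Finset.mem_product, Nat.lt_succ_iff, and_assoc]

lemma Sup.one (n : ℕ) : Sup n 1 := ⟨rfl, fun _ _ => rfl⟩

lemma Sup.mul {n : ℕ} {σ τ : Equiv.Perm ℕ} (hσ : Sup n σ) (hτ : Sup n τ) : Sup n (σ * τ) := by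
  refine ⟨?_, fun x hx => ?_⟩
  · simp [Equiv.Perm.mul_apply, hτ.1, hσ.1]
  · simp [Equiv.Perm.mul_apply, hτ.2 x hx, hσ.2 x hx]

lemma Sup.inv {n : ℕ} {σ : Equiv.Perm ℕ} (hσ : Sup n σ) : Sup n σ⁻¹ := by
  constructor
  · rw [Equiv.Perm.inv_eq_iff_eq]; exact hσ.1.symm
  · intro x hx
    rw [Equiv.Perm.inv_eq_iff_eq]; exact (hσ.2 x hx).symm

lemma Sup.sw {n i : ℕ} (h1 : 1 ≤ i) (h2 : i + 1 ≤ n) : Sup n (sw i) := by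
  constructor
  · exact Equiv.swap_apply_of_ne_of_ne (by omega) (by omega)
  · intro x hx; exact Equiv.swap_apply_of_ne_of_ne (by omega) (by omega)

lemma Sup.apply_le {n : ℕ} {σ : Equiv.Perm ℕ} (hσ : Sup n σ) {x : ℕ} (hx : x ≤ n) :
    σ x ≤ n := by
  by_contra h
  have h2 := hσ.2 (σ x) (by omega)
  have := σ.injective h2
  omega

lemma Sup.inv_apply_le {n : ℕ} {σ : Equiv.Perm ℕ} (hσ : Sup n σ) {x : ℕ} (hx : x ≤ n) :
    σ⁻¹ x ≤ n := hσ.inv.apply_le hx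

end S10
-- Section: counting lemmas
namespace S10
open Finset Equiv

variable {n : ℕ}

/-- rewriting `nInv A` through the bijection `p ↦ (B p.1, B p.2)` (sorted). -/
lemma nInv_via (A B : Equiv.Perm ℕ) (hB : Sup n B) :
    nInv n A = ((P n).filter fun p =>
      (B p.1 < B p.2 ∧ A (B p.2) < A (B p.1)) ∨
      (B p.2 < B p.1 ∧ A (B p.1) < A (B p.2))).card := by
  classical
  symm
  apply Finset.card_bij'
    (i := fun p _ => if B p.1 < B p.2 then (B p.1, B p.2) else (B p.2, B p.1))
    (j := fun q _ => if B⁻¹ q.1 < B⁻¹ q.2 then (B⁻¹ q.1, B⁻¹ q.2) else (B⁻¹ q.2, B⁻¹ q.1))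
  · intro p hp
    simp only [Finset.mem_filter, mem_P] at hp
    obtain ⟨⟨h1, h2, h12⟩, hcond⟩ := hp
    split_ifs with hB12
    · simp only [Finset.mem_filter, mem_P]
      refine ⟨⟨hB.apply_le h1, hB.apply_le h2, hB12⟩, ?_⟩
      rcases hcond with ⟨_, h⟩ | ⟨h, _⟩
      · exact h
      · omega
    · simp only [Finset.mem_filter, mem_P]
      have hne : B p.1 ≠ B p.2 := fun h => by
        have := B.injective h; omega
      have hgt : B p.2 < B p.1 := by omega
      refine ⟨⟨hB.apply_le h2, hB.apply_le h1, hgt⟩, ?_⟩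
      rcases hcond with ⟨h, _⟩ | ⟨_, h⟩
      · omega
      · exact h
  · intro q hq
    simp only [Finset.mem_filter, mem_P] at hq
    obtain ⟨⟨h1, h2, h12⟩, hcond⟩ := hq
    split_ifs with hB12
    · simp only [Finset.mem_filter, mem_P]
      refine ⟨⟨hB.inv_apply_le h1, hB.inv_apply_le h2, hB12⟩, Or.inl ?_⟩
      simp only [Equiv.Perm.apply_inv_self]
      exact ⟨h12, hcond⟩
    · have hne : B⁻¹ q.1 ≠ B⁻¹ q.2 := fun h => by
        have := B⁻¹.injective h; omega
      have hgt : B⁻¹ q.2 < B⁻¹ q.1 := by omega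
      simp only [Finset.mem_filter, mem_P]
      refine ⟨⟨hB.inv_apply_le h2, hB.inv_apply_le h1, hgt⟩, Or.inr ?_⟩
      simp only [Equiv.Perm.apply_inv_self]
      exact ⟨h12, hcond⟩
  · intro p hp
    simp only [Finset.mem_filter, mem_P] at hp
    obtain ⟨⟨h1, h2, h12⟩, _⟩ := hp
    by_cases hB12 : B p.1 < B p.2
    · rw [if_pos hB12]
      simp only [Equiv.Perm.inv_apply_self]
      rw [if_pos h12]
    · rw [if_neg hB12]
      simp only [Equiv.Perm.inv_apply_self]
      rw [if_neg (by omega)]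
  · intro q hq
    simp only [Finset.mem_filter, mem_P] at hq
    obtain ⟨⟨h1, h2, h12⟩, _⟩ := hq
    by_cases hB12 : B⁻¹ q.1 < B⁻¹ q.2
    · rw [if_pos hB12]
      simp only [Equiv.Perm.apply_inv_self]
      rw [if_pos h12]
    · rw [if_neg hB12]
      simp only [Equiv.Perm.apply_inv_self]
      rw [if_neg (by omega)]

end S10
namespace S10
open Finset Equiv

variable {n : ℕ}

lemma nInv_mul (A B : Equiv.Perm ℕ) (hB : Sup n B) :
    nInv n A + nInv n B = nInv n (A * B)
      + 2 * ((P n).filter fun p => B p.2 < B p.1 ∧ A (B p.1) < A (B p.2)).card := by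
  classical
  have hAB : nInv n (A * B) = ((P n).filter fun p => A (B p.2) < A (B p.1)).card := by
    rfl
  rw [nInv_via A B hB, hAB, nInv]
  simp only [Finset.card_filter]
  rw [← Finset.sum_add_distrib, Finset.mul_sum, ← Finset.sum_add_distrib]
  apply Finset.sum_congr rfl
  intro p hp
  have hp' := (mem_P.1 hp)
  have h1 : B p.1 ≠ B p.2 := fun h => by have := B.injective h; omega
  have h2 : A (B p.1) ≠ A (B p.2) := fun h => by have := A.injective h; omega
  split_ifs <;> omega

lemma nInv_mul_le (A B : Equiv.Perm ℕ) (hB : Sup n B) :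
    nInv n (A * B) ≤ nInv n A + nInv n B := by
  have := nInv_mul A B hB; omega

lemma additive_iff (A B : Equiv.Perm ℕ) (hB : Sup n B) :
    nInv n (A * B) = nInv n A + nInv n B ↔
      ∀ p ∈ P n, B p.2 < B p.1 → A (B p.2) < A (B p.1) := by
  classical
  have h := nInv_mul A B hB
  constructor
  · intro he p hp hX
    have hcard : ((P n).filter fun p => B p.2 < B p.1 ∧ A (B p.1) < A (B p.2)).card = 0 := by
      omega
    rw [Finset.card_eq_zero] at hcard
    by_contra hY
    have h2 : A (B p.1) ≠ A (B p.2) := fun h => by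
      have := A.injective h; omega
    have hmem : p ∈ (P n).filter fun p => B p.2 < B p.1 ∧ A (B p.1) < A (B p.2) := by
      rw [Finset.mem_filter]
      exact ⟨hp, hX, by omega⟩
    rw [hcard] at hmem
    simp at hmem
  · intro hall
    have he : ((P n).filter fun p => B p.2 < B p.1 ∧ A (B p.1) < A (B p.2)) = ∅ := by
      rw [Finset.filter_eq_empty_iff]
      intro p hp hc
      have := hall p hp hc.1
      omega
    rw [he] at h
    simp at h
    omega

lemma filter_sw (i : ℕ) (h2 : i + 1 ≤ n) :
    ((P n).filter fun p => sw i p.2 < sw i p.1) = {(i, i+1)} := by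
  ext ⟨a, b⟩
  simp only [Finset.mem_filter, mem_P, Finset.mem_singleton, Prod.mk.injEq]
  constructor
  · rintro ⟨⟨ha, hb, hab⟩, hlt⟩
    simp only [Equiv.swap_apply_def] at hlt
    split_ifs at hlt <;> omega
  · rintro ⟨rfl, rfl⟩
    refine ⟨⟨by omega, by omega, by omega⟩, ?_⟩
    rw [Equiv.swap_apply_left, Equiv.swap_apply_right]
    omega

lemma nInv_sw (i : ℕ) (h2 : i + 1 ≤ n) : nInv n (sw i) = 1 := by
  rw [nInv, filter_sw i h2, Finset.card_singleton]

lemma nInv_mul_sw (A : Equiv.Perm ℕ) (i : ℕ) (h1 : 1 ≤ i) (h2 : i + 1 ≤ n) :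
    nInv n A + 1 = nInv n (A * sw i) + 2 * (if A (i+1) < A i then 1 else 0) := by
  classical
  have h := nInv_mul A (sw i) (Sup.sw h1 h2)
  rw [nInv_sw i h2] at h
  have hfe : ((P n).filter fun p => sw i p.2 < sw i p.1 ∧ A (sw i p.1) < A (sw i p.2))
      = if A (i+1) < A i then ({(i, i+1)} : Finset (ℕ × ℕ)) else ∅ := by
    rw [← Finset.filter_filter, filter_sw i h2, Finset.filter_singleton]
    congr 1
    rw [Equiv.swap_apply_left, Equiv.swap_apply_right]
  rw [hfe] at h
  split_ifs at h ⊢ <;> simp_all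


lemma swap_flip_iff (i u v : ℕ) (huv : v < u) :
    sw i u < sw i v ↔ (v = i ∧ u = i + 1) := by
  simp only [Equiv.swap_apply_def]
  split_ifs <;> omega

lemma filter_N_left (A : Equiv.Perm ℕ) (hA : Sup n A) (i : ℕ) (h1 : 1 ≤ i) (h2 : i + 1 ≤ n) :
    ((P n).filter fun p => A p.2 < A p.1 ∧ sw i (A p.1) < sw i (A p.2))
      = if A⁻¹ (i+1) < A⁻¹ i then ({(A⁻¹ (i+1), A⁻¹ i)} : Finset (ℕ × ℕ)) else ∅ := by
  classical
  ext ⟨a, b⟩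
  by_cases hc : A⁻¹ (i+1) < A⁻¹ i
  · rw [if_pos hc]
    simp only [Finset.mem_filter, mem_P, Finset.mem_singleton, Prod.mk.injEq]
    constructor
    · rintro ⟨⟨ha, hb, hab⟩, hX, hY⟩
      obtain ⟨e1, e2⟩ := (swap_flip_iff i (A a) (A b) hX).1 hY
      exact ⟨(Equiv.Perm.eq_inv_iff_eq).2 e2, (Equiv.Perm.eq_inv_iff_eq).2 e1⟩
    · rintro ⟨rfl, rfl⟩
      refine ⟨⟨hA.inv_apply_le (by omega), hA.inv_apply_le (by omega), hc⟩, ?_, ?_⟩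
      · simp only [Equiv.Perm.apply_inv_self]; omega
      · simp only [Equiv.Perm.apply_inv_self]
        rw [Equiv.swap_apply_left, Equiv.swap_apply_right]
        omega
  · rw [if_neg hc]
    simp only [Finset.mem_filter, mem_P, Finset.notMem_empty, iff_false]
    rintro ⟨⟨ha, hb, hab⟩, hX, hY⟩
    obtain ⟨e1, e2⟩ := (swap_flip_iff i (A a) (A b) hX).1 hY
    have ea : a = A⁻¹ (i+1) := (Equiv.Perm.eq_inv_iff_eq).2 e2
    have eb : b = A⁻¹ i := (Equiv.Perm.eq_inv_iff_eq).2 e1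
    omega

lemma nInv_sw_mul (A : Equiv.Perm ℕ) (hA : Sup n A) (i : ℕ) (h1 : 1 ≤ i) (h2 : i + 1 ≤ n) :
    nInv n A + 1 = nInv n (sw i * A) + 2 * (if A⁻¹ (i+1) < A⁻¹ i then 1 else 0) := by
  classical
  have h := nInv_mul (sw i) A hA
  rw [nInv_sw i h2, filter_N_left A hA i h1 h2] at h
  split_ifs at h ⊢ <;> simp_all <;> omega

end S10
namespace S10
open Finset Equiv

variable {n : ℕ}

lemma apply_ne (A : Equiv.Perm ℕ) {i j : ℕ} (h : i ≠ j) : A i ≠ A j :=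
  fun e => h (A.injective e)

lemma R_asc (A : Equiv.Perm ℕ) (i : ℕ) (h1 : 1 ≤ i) (h2 : i + 1 ≤ n)
    (h : A i < A (i+1)) : nInv n (A * sw i) = nInv n A + 1 := by
  have hh := nInv_mul_sw A i h1 h2
  rw [if_neg (by omega)] at hh; omega

lemma R_desc (A : Equiv.Perm ℕ) (i : ℕ) (h1 : 1 ≤ i) (h2 : i + 1 ≤ n)
    (h : A (i+1) < A i) : nInv n (A * sw i) + 1 = nInv n A := by
  have hh := nInv_mul_sw A i h1 h2
  rw [if_pos h] at hh; omega

lemma L_asc (A : Equiv.Perm ℕ) (hA : Sup n A) (i : ℕ) (h1 : 1 ≤ i) (h2 : i + 1 ≤ n)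
    (h : A⁻¹ i < A⁻¹ (i+1)) : nInv n (sw i * A) = nInv n A + 1 := by
  have hh := nInv_sw_mul A hA i h1 h2
  rw [if_neg (by omega)] at hh; omega

lemma L_desc (A : Equiv.Perm ℕ) (hA : Sup n A) (i : ℕ) (h1 : 1 ≤ i) (h2 : i + 1 ≤ n)
    (h : A⁻¹ (i+1) < A⁻¹ i) : nInv n (sw i * A) + 1 = nInv n A := by
  have hh := nInv_sw_mul A hA i h1 h2
  rw [if_pos h] at hh; omega

lemma L_asc_iff (A : Equiv.Perm ℕ) (hA : Sup n A) (i : ℕ) (h1 : 1 ≤ i) (h2 : i + 1 ≤ n) :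
    nInv n (sw i * A) = nInv n A + 1 ↔ A⁻¹ i < A⁻¹ (i+1) := by
  constructor
  · intro he
    have hne : A⁻¹ i ≠ A⁻¹ (i+1) := apply_ne _ (by omega)
    by_contra hlt
    have := L_desc A hA i h1 h2 (by omega)
    omega
  · exact L_asc A hA i h1 h2

lemma R_asc_iff (A : Equiv.Perm ℕ) (i : ℕ) (h1 : 1 ≤ i) (h2 : i + 1 ≤ n) :
    nInv n (A * sw i) = nInv n A + 1 ↔ A i < A (i+1) := by
  constructor
  · intro he
    have hne : A i ≠ A (i+1) := apply_ne _ (by omega)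
    by_contra hlt
    have := R_desc A i h1 h2 (by omega)
    omega
  · exact R_asc A i h1 h2

/- word lemmas -/
lemma wordPerm_nil : wordPerm n ([] : List (HIdx n)) = 1 := rfl

lemma wordPerm_cons (i : HIdx n) (w : List (HIdx n)) :
    wordPerm n (i :: w) = sw i.1 * wordPerm n w := by
  simp [wordPerm]

lemma wordPerm_single (i : HIdx n) : wordPerm n [i] = sw i.1 := by
  simp [wordPerm]

lemma wordPerm_append (u v : List (HIdx n)) :
    wordPerm n (u ++ v) = wordPerm n u * wordPerm n v := by
  simp [wordPerm]

lemma Sup_wordPerm (w : List (HIdx n)) : Sup n (wordPerm n w) := by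
  induction w with
  | nil => exact Sup.one n
  | cons i w ih =>
    rw [wordPerm_cons]
    exact (Sup.sw i.2.1 i.2.2).mul ih

lemma nInv_one : nInv n 1 = 0 := by
  rw [nInv, Finset.card_eq_zero, Finset.filter_eq_empty_iff]
  intro p hp
  have := mem_P.1 hp
  simp only [Equiv.Perm.one_apply]
  omega

lemma nInv_wordPerm_le (w : List (HIdx n)) : nInv n (wordPerm n w) ≤ w.length := by
  induction w with
  | nil => rw [wordPerm_nil]; simp [nInv_one]
  | cons i w ih =>
    rw [wordPerm_cons]
    have h := nInv_sw_mul (wordPerm n w) (Sup_wordPerm w) i.1 i.2.1 i.2.2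
    simp only [List.length_cons]
    split_ifs at h <;> omega

lemma nInv_eq_zero {σ : Equiv.Perm ℕ} (hσ : Sup n σ) (h0 : nInv n σ = 0) : σ = 1 := by
  have H : ∀ a b : ℕ, a ≤ n → b ≤ n → a < b → σ a < σ b := by
    intro a b ha hb hab
    rw [nInv, Finset.card_eq_zero, Finset.filter_eq_empty_iff] at h0
    have h1 := h0 (show ((a, b) : ℕ × ℕ) ∈ P n from mem_P.2 ⟨ha, hb, hab⟩)
    have h2 : σ a ≠ σ b := apply_ne _ (by omega)
    simp only at h1
    omega
  have mono : ∀ x, x ≤ n → x ≤ σ x := by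
    intro x
    induction x with
    | zero => intro _; exact Nat.zero_le _
    | succ k ih =>
      intro hk
      have h1 : σ k < σ (k+1) := H k (k+1) (by omega) hk (by omega)
      have := ih (by omega)
      omega
  have monoinv : ∀ x, x ≤ n → x ≤ σ⁻¹ x := by
    intro x
    induction x with
    | zero => intro _; exact Nat.zero_le _
    | succ k ih =>
      intro hk
      have hik := hσ.inv_apply_le (x := k) (by omega)
      have hik1 := hσ.inv_apply_le (x := k+1) hk
      have h1 : σ⁻¹ k < σ⁻¹ (k+1) := by
        have hne : σ⁻¹ k ≠ σ⁻¹ (k+1) := apply_ne _ (by omega)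
        by_contra hc
        have := H (σ⁻¹ (k+1)) (σ⁻¹ k) hik1 hik (by omega)
        simp only [Equiv.Perm.apply_inv_self] at this
        omega
      have := ih (by omega)
      omega
  apply Equiv.ext
  intro x
  by_cases hx : x ≤ n
  · have h1 := mono x hx
    have h2 := monoinv (σ x) (hσ.apply_le hx)
    simp only [Equiv.Perm.inv_apply_self] at h2
    simp only [Equiv.Perm.one_apply]
    omega
  · simp only [Equiv.Perm.one_apply]
    exact hσ.2 x (by omega)

lemma exists_descent (σ : Equiv.Perm ℕ) (hσ : Sup n σ) (hne : nInv n σ ≠ 0) :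
    ∃ i : ℕ, 1 ≤ i ∧ i + 1 ≤ n ∧ σ (i+1) < σ i := by
  by_contra h
  push_neg at h
  apply hne
  have asc : ∀ k, 1 ≤ k → k + 1 ≤ n → σ k < σ (k+1) := by
    intro k hk1 hk2
    have h1 := h k hk1 hk2
    have h2 : σ k ≠ σ (k+1) := apply_ne _ (by omega)
    omega
  have chain : ∀ b, b ≤ n → ∀ a, a < b → σ a < σ b := by
    intro b
    induction b with
    | zero => intro _ a ha; omega
    | succ k ih =>
      intro hk a ha
      have hstep : σ k < σ (k+1) := by
        rcases Nat.eq_zero_or_pos k with rfl | hpos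
        · have h1 : σ (0+1) ≠ 0 := fun h0 =>
            absurd (σ.injective (h0.trans hσ.1.symm)) one_ne_zero
          rw [hσ.1]
          omega
        · exact asc k hpos hk
      rcases Nat.lt_or_ge a k with h' | h'
      · exact lt_trans (ih (by omega) a h') hstep
      · have : a = k := by omega
        subst this; exact hstep
  rw [nInv, Finset.card_eq_zero, Finset.filter_eq_empty_iff]
  intro p hp
  obtain ⟨h1, h2, h12⟩ := mem_P.1 hp
  have := chain p.2 h2 p.1 h12
  omega

lemma exists_red_aux : ∀ k : ℕ, ∀ σ : Equiv.Perm ℕ, Sup n σ → nInv n σ ≤ k →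
    ∃ w : List (HIdx n), wordPerm n w = σ ∧ w.length = nInv n σ := by
  intro k
  induction k with
  | zero =>
    intro σ hσ h0
    have h1 : σ = 1 := nInv_eq_zero hσ (by omega)
    exact ⟨[], by rw [wordPerm_nil, h1], by simp [h1, nInv_one]⟩
  | succ k ih =>
    intro σ hσ hk
    by_cases h0 : nInv n σ = 0
    · have h1 : σ = 1 := nInv_eq_zero hσ h0
      exact ⟨[], by rw [wordPerm_nil, h1], by simp [h1, nInv_one]⟩
    · obtain ⟨i, hi1, hi2, hdesc⟩ := exists_descent σ hσ h0
      have hstep := R_desc σ i hi1 hi2 hdesc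
      have hsup' : Sup n (σ * sw i) := hσ.mul (Sup.sw hi1 hi2)
      obtain ⟨w', hw1, hw2⟩ := ih (σ * sw i) hsup' (by omega)
      refine ⟨w' ++ [show HIdx n from ⟨i, hi1, hi2⟩], ?_, ?_⟩
      · rw [wordPerm_append, hw1, wordPerm_single, mul_assoc]
        simp [Equiv.swap_mul_self]
      · simp only [List.length_append, List.length_singleton, hw2]
        omega

lemma exists_red (σ : Equiv.Perm ℕ) (hσ : Sup n σ) :
    ∃ w : List (HIdx n), wordPerm n w = σ ∧ w.length = nInv n σ :=
  exists_red_aux (nInv n σ) σ hσ le_rfl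

lemma isRedWord_iff (σ : Equiv.Perm ℕ) (w : List (HIdx n)) :
    IsRedWord n σ w ↔ wordPerm n w = σ ∧ w.length = nInv n σ := by
  constructor
  · rintro ⟨h1, h2⟩
    refine ⟨h1, ?_⟩
    obtain ⟨r, hr1, hr2⟩ := exists_red σ (h1 ▸ Sup_wordPerm w)
    have h3 := h2 r hr1
    have h4 := nInv_wordPerm_le w
    rw [h1] at h4
    omega
  · rintro ⟨h1, h2⟩
    refine ⟨h1, fun w' hw' => ?_⟩
    have := nInv_wordPerm_le w'
    rw [hw'] at this
    omega

/-- peeling the first letter of a reduced word -/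
lemma red_cons {i : HIdx n} {w : List (HIdx n)}
    (h : (i :: w).length = nInv n (wordPerm n (i :: w))) :
    w.length = nInv n (wordPerm n w) ∧
      nInv n (wordPerm n (i :: w)) = nInv n (wordPerm n w) + 1 := by
  have h1 := nInv_wordPerm_le w
  have h2 := nInv_sw_mul (wordPerm n w) (Sup_wordPerm w) i.1 i.2.1 i.2.2
  rw [← wordPerm_cons] at h2
  simp only [List.length_cons] at h
  split_ifs at h2 <;> omega

end S10
namespace S10
open Finset Equiv

variable {n : ℕ}

/-- product of generators along a word -/
def piw (n : ℕ) (w : List (HIdx n)) : Hecke0 n := (w.map (piGen n)).prod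

lemma piw_nil : piw n [] = 1 := rfl

lemma piw_cons (i : HIdx n) (w : List (HIdx n)) :
    piw n (i :: w) = piGen n i * piw n w := by simp [piw]

lemma piw_append (u v : List (HIdx n)) :
    piw n (u ++ v) = piw n u * piw n v := by simp [piw]

lemma rel_idem (i : HIdx n) : piGen n i * piGen n i = piGen n i := by
  have h := RingQuot.mkAlgHom_rel ℂ (HeckeRel.idem i)
  simpa [piGen, map_mul] using h

lemma rel_braid (i j : HIdx n) (h : i.1 + 1 = j.1) :
    piGen n i * piGen n j * piGen n i = piGen n j * piGen n i * piGen n j := by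
  have hh := RingQuot.mkAlgHom_rel ℂ (HeckeRel.braid i j h)
  simpa [piGen, map_mul] using hh

lemma rel_comm (i j : HIdx n) (h : i.1 + 2 ≤ j.1) :
    piGen n i * piGen n j = piGen n j * piGen n i := by
  have hh := RingQuot.mkAlgHom_rel ℂ (HeckeRel.comm i j h)
  simpa [piGen, map_mul] using hh

/- swap identities -/
lemma sw_sw (i : ℕ) (σ : Equiv.Perm ℕ) : sw i * (sw i * σ) = σ := by
  rw [← mul_assoc, Equiv.swap_mul_self, one_mul]

lemma sw_mul_inv_apply (i : ℕ) (σ : Equiv.Perm ℕ) (x : ℕ) :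
    (sw i * σ)⁻¹ x = σ⁻¹ (sw i x) := by
  rw [mul_inv_rev, Equiv.Perm.mul_apply, Equiv.swap_inv]

lemma sw_comm {i j : ℕ} (h : i + 2 ≤ j) : sw i * sw j = sw j * sw i := by
  apply Equiv.ext
  intro x
  simp only [Equiv.Perm.mul_apply, Equiv.swap_apply_def]
  split_ifs <;> omega

lemma sw_braid (i : ℕ) : sw i * sw (i+1) * sw i = sw (i+1) * sw i * sw (i+1) := by
  have h1 := Equiv.swap_mul_swap_mul_swap (x := i+2) (y := i+1) (z := i)
    (by omega) (by omega)
  have h2 := Equiv.swap_mul_swap_mul_swap (x := i) (y := i+1) (z := i+2)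
    (by omega) (by omega)
  rw [Equiv.swap_comm (i+1) i, Equiv.swap_comm (i+2) (i+1)] at h1
  show Equiv.swap i (i+1) * Equiv.swap (i+1) (i+2) * Equiv.swap i (i+1)
      = Equiv.swap (i+1) (i+2) * Equiv.swap i (i+1) * Equiv.swap (i+1) (i+2)
  rw [h1, h2, Equiv.swap_comm]

end S10
namespace S10
open Finset Equiv

variable {n : ℕ}

/-- each letter heading a reduced word is a left descent -/
lemma cons_left_descent {i : HIdx n} {w : List (HIdx n)}
    (hred : (i :: w).length = nInv n (wordPerm n (i :: w))) :
    (wordPerm n (i :: w))⁻¹ (i.1 + 1) < (wordPerm n (i :: w))⁻¹ i.1 := by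
  obtain ⟨hw, hstep⟩ := red_cons hred
  have hasc : (wordPerm n w)⁻¹ i.1 < (wordPerm n w)⁻¹ (i.1 + 1) := by
    rw [wordPerm_cons] at hstep
    exact (L_asc_iff (wordPerm n w) (Sup_wordPerm w) i.1 i.2.1 i.2.2).1 hstep
  rw [wordPerm_cons, sw_mul_inv_apply, sw_mul_inv_apply,
    Equiv.swap_apply_left, Equiv.swap_apply_right]
  exact hasc

lemma welldef_core (p : ℕ)
    (IH : ∀ q, q < p → ∀ u v : List (HIdx n),
      u.length = nInv n (wordPerm n u) → v.length = nInv n (wordPerm n v) →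
      wordPerm n u = wordPerm n v → u.length = q → piw n u = piw n v)
    (a b : HIdx n) (u' v' : List (HIdx n)) (hab : a.1 < b.1)
    (hu : (a :: u').length = nInv n (wordPerm n (a :: u')))
    (hv : (b :: v').length = nInv n (wordPerm n (b :: v')))
    (huv : wordPerm n (a :: u') = wordPerm n (b :: v'))
    (hlen : (a :: u').length = p) :
    piw n (a :: u') = piw n (b :: v') := by
  classical
  set σ := wordPerm n (a :: u') with hσ
  set τa := wordPerm n u' with hτa
  set τb := wordPerm n v' with hτb
  have hA1 := a.2.1
  have hA2 := a.2.2
  have hB1 := b.2.1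
  have hB2 := b.2.2
  have hσa : σ = sw a.1 * τa := wordPerm_cons a u'
  have hσb : σ = sw b.1 * τb := by rw [huv]; exact wordPerm_cons b v'
  have hτaσ : τa = sw a.1 * σ := by rw [hσa, sw_sw]
  have hτbσ : τb = sw b.1 * σ := by rw [hσb, sw_sw]
  obtain ⟨hu', hstepa⟩ := red_cons hu
  obtain ⟨hv', hstepb⟩ := red_cons hv
  have da : σ⁻¹ (a.1 + 1) < σ⁻¹ a.1 := cons_left_descent hu
  have db : σ⁻¹ (b.1 + 1) < σ⁻¹ b.1 := by
    have h := cons_left_descent hv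
    rw [← huv] at h
    exact h
  have hSτa : Sup n τa := Sup_wordPerm u'
  have hSτb : Sup n τb := Sup_wordPerm v'
  have hSσ : Sup n σ := Sup_wordPerm _
  -- lengths
  have hlv : v'.length = u'.length := by
    have h1 : u'.length + 1 = nInv n σ := by simpa using hu
    have h2 : v'.length + 1 = nInv n σ := by
      have := hv; rw [← huv] at this; simpa using this
    omega
  have hnτa : nInv n τa = u'.length := hu'.symm
  have hnτb : nInv n τb = u'.length := by rw [← hτb] at hv'; omega
  rcases Nat.lt_or_ge (a.1 + 1) b.1 with hcase | hcase
  · -- commuting case : a.1 + 2 ≤ b.1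
    have hc : a.1 + 2 ≤ b.1 := hcase
    -- b is a left descent of τa
    have dτa : τa⁻¹ (b.1 + 1) < τa⁻¹ b.1 := by
      rw [hτaσ, sw_mul_inv_apply, sw_mul_inv_apply,
        Equiv.swap_apply_of_ne_of_ne (by omega) (by omega),
        Equiv.swap_apply_of_ne_of_ne (by omega) (by omega)]
      exact db
    have dτb : τb⁻¹ (a.1 + 1) < τb⁻¹ a.1 := by
      rw [hτbσ, sw_mul_inv_apply, sw_mul_inv_apply,
        Equiv.swap_apply_of_ne_of_ne (by omega) (by omega),
        Equiv.swap_apply_of_ne_of_ne (by omega) (by omega)]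
      exact da
    set ω := sw b.1 * τa with hω
    have hnω : nInv n ω + 1 = nInv n τa := L_desc τa hSτa b.1 hB1 hB2 dτa
    have hSω : Sup n ω := (Sup.sw hB1 hB2).mul hSτa
    obtain ⟨r, hr1, hr2⟩ := exists_red ω hSω
    -- ω = sw a.1 * τb as well
    have hωb : ω = sw a.1 * τb := by
      rw [hω, hτaσ, hτbσ, ← mul_assoc, ← mul_assoc, sw_comm hc]
    -- b :: r is a reduced word for τa
    have hw1perm : wordPerm n (b :: r) = τa := by
      rw [wordPerm_cons, hr1, hω, sw_sw]
    have hw1red : (b :: r).length = nInv n (wordPerm n (b :: r)) := by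
      rw [hw1perm]; simp only [List.length_cons]; omega
    have e1 : piw n u' = piw n (b :: r) :=
      IH u'.length (by simp at hlen; omega) u' (b :: r) hu' hw1red
        (by rw [hw1perm]) rfl
    -- a :: r is a reduced word for τb
    have hw2perm : wordPerm n (a :: r) = τb := by
      rw [wordPerm_cons, hr1, hωb, sw_sw]
    have hw2red : (a :: r).length = nInv n (wordPerm n (a :: r)) := by
      rw [hw2perm]; simp only [List.length_cons]; omega
    have e2 : piw n v' = piw n (a :: r) :=
      IH v'.length (by simp at hlen; omega) v' (a :: r) hv' hw2red
        (by rw [hw2perm]) rfl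
    rw [piw_cons, piw_cons, e1, e2, piw_cons, piw_cons,
      ← mul_assoc, ← mul_assoc, rel_comm a b hc]
  · -- braid case : b.1 = a.1 + 1
    have hB : b.1 = a.1 + 1 := by omega
    -- descent of τa at b
    have dτa : τa⁻¹ (b.1 + 1) < τa⁻¹ b.1 := by
      rw [hτaσ, sw_mul_inv_apply, sw_mul_inv_apply, hB,
        Equiv.swap_apply_of_ne_of_ne (by omega) (by omega),
        Equiv.swap_apply_right]
      rw [hB] at db
      exact lt_trans db da
    set μ := sw b.1 * τa with hμ
    have hnμ : nInv n μ + 1 = nInv n τa := L_desc τa hSτa b.1 hB1 hB2 dτa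
    have hSμ : Sup n μ := (Sup.sw hB1 hB2).mul hSτa
    -- descent of μ at a
    have dμ : μ⁻¹ (a.1 + 1) < μ⁻¹ a.1 := by
      rw [hμ, sw_mul_inv_apply, sw_mul_inv_apply, hτaσ,
        sw_mul_inv_apply, sw_mul_inv_apply, hB]
      rw [show (sw (a.1+1)) (a.1+1) = a.1+1+1 from Equiv.swap_apply_left _ _]
      rw [show (sw (a.1+1)) a.1 = a.1 from
        Equiv.swap_apply_of_ne_of_ne (by omega) (by omega)]
      rw [show (sw a.1) (a.1+1+1) = a.1+1+1 from
        Equiv.swap_apply_of_ne_of_ne (by omega) (by omega)]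
      rw [show (sw a.1) a.1 = a.1+1 from Equiv.swap_apply_left _ _]
      rw [hB] at db
      exact db
    set ω := sw a.1 * μ with hω
    have hnω : nInv n ω + 1 = nInv n μ := L_desc μ hSμ a.1 hA1 hA2 dμ
    have hSω : Sup n ω := (Sup.sw hA1 hA2).mul hSμ
    obtain ⟨r, hr1, hr2⟩ := exists_red ω hSω
    -- b :: a :: r reduced word for τa
    have hw1perm : wordPerm n (b :: a :: r) = τa := by
      rw [wordPerm_cons, wordPerm_cons, hr1, hω, sw_sw, hμ, sw_sw]
    have hw1red : (b :: a :: r).length = nInv n (wordPerm n (b :: a :: r)) := by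
      rw [hw1perm]; simp only [List.length_cons]; omega
    have e1 : piw n u' = piw n (b :: a :: r) :=
      IH u'.length (by simp at hlen; omega) u' (b :: a :: r) hu' hw1red
        (by rw [hw1perm]) rfl
    -- a :: b :: r reduced word for τb
    have hbraidσ : sw a.1 * (sw b.1 * (sw a.1 * σ)) = sw b.1 * (sw a.1 * (sw b.1 * σ)) := by
      have h := congrArg (fun g => g * σ) (sw_braid a.1)
      simp only [mul_assoc] at h
      rw [hB]
      exact h
    have hω2 : ω = sw b.1 * (sw a.1 * (sw b.1 * σ)) := by
      rw [hω, hμ, hτaσ, ← hbraidσ]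
    have hw2perm : wordPerm n (a :: b :: r) = τb := by
      rw [wordPerm_cons, wordPerm_cons, hr1, hω2, sw_sw, sw_sw, hτbσ]
    have hw2red : (a :: b :: r).length = nInv n (wordPerm n (a :: b :: r)) := by
      rw [hw2perm]; simp only [List.length_cons]; omega
    have e2 : piw n v' = piw n (a :: b :: r) :=
      IH v'.length (by simp at hlen; omega) v' (a :: b :: r) hv' hw2red
        (by rw [hw2perm]) rfl
    rw [piw_cons, piw_cons, e1, e2, piw_cons, piw_cons, piw_cons, piw_cons]
    rw [← mul_assoc, ← mul_assoc, ← mul_assoc, ← mul_assoc,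
      rel_braid a b hB.symm]

theorem piw_welldef (p : ℕ) : ∀ u v : List (HIdx n),
    u.length = nInv n (wordPerm n u) → v.length = nInv n (wordPerm n v) →
    wordPerm n u = wordPerm n v → u.length = p → piw n u = piw n v := by
  induction p using Nat.strong_induction_on with
  | _ p IH =>
  intro u v hu hv huv hlen
  have hlv : v.length = u.length := by
    rw [hu, hv, huv]
  cases u with
  | nil =>
    cases v with
    | nil => rfl
    | cons b v' => simp at hlv
  | cons a u' =>
    cases v with
    | nil => simp at hlv
    | cons b v' =>
      rcases lt_trichotomy a.1 b.1 with hab | hab | hab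
      · exact welldef_core p IH a b u' v' hab hu hv huv hlen
      · have haeb : a = b := Subtype.ext hab
        subst haeb
        have hperm : wordPerm n u' = wordPerm n v' := by
          have h1 : sw a.1 * wordPerm n u' = sw a.1 * wordPerm n v' := by
            rw [← wordPerm_cons, ← wordPerm_cons]; exact huv
          exact mul_left_cancel h1
        obtain ⟨hu'', _⟩ := red_cons hu
        obtain ⟨hv'', _⟩ := red_cons hv
        have := IH u'.length (by simp at hlen; omega) u' v' hu'' hv'' hperm rfl
        rw [piw_cons, piw_cons, this]
      · exact (welldef_core p IH b a v' u' hab hv hu huv.symm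
          (by simp at hlen hlv ⊢; omega)).symm

end S10
namespace S10
open Finset Equiv

variable {n : ℕ}

lemma piw_single (i : HIdx n) : piw n [i] = piGen n i := by simp [piw]

/-- absorption: a right descent generator is absorbed -/
lemma piw_absorb {w : List (HIdx n)} {i : HIdx n}
    (hred : w.length = nInv n (wordPerm n w))
    (hdesc : (wordPerm n w) (i.1 + 1) < (wordPerm n w) i.1) :
    piw n w * piGen n i = piw n w := by
  have hstep : nInv n (wordPerm n w * sw i.1) + 1 = nInv n (wordPerm n w) :=
    R_desc _ i.1 i.2.1 i.2.2 hdesc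
  obtain ⟨r, hr1, hr2⟩ := exists_red (wordPerm n w * sw i.1)
    ((Sup_wordPerm w).mul (Sup.sw i.2.1 i.2.2))
  have hperm : wordPerm n (r ++ [i]) = wordPerm n w := by
    rw [wordPerm_append, hr1, wordPerm_single, mul_assoc]
    simp [Equiv.swap_mul_self]
  have hredr : (r ++ [i]).length = nInv n (wordPerm n (r ++ [i])) := by
    rw [hperm]; simp only [List.length_append, List.length_singleton]; omega
  have e := piw_welldef w.length w (r ++ [i]) hred hredr (by rw [hperm]) rfl
  rw [e, piw_append, piw_single, mul_assoc, rel_idem]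

/-- the lifting lemma -/
lemma lift_lemma (A B : Equiv.Perm ℕ) (hA : Sup n A) (hB : Sup n B) (i : ℕ)
    (h1 : 1 ≤ i) (h2 : i + 1 ≤ n)
    (hadd : nInv n (A * B) = nInv n A + nInv n B)
    (hAasc : A i < A (i + 1))
    (hBasc : B⁻¹ i < B⁻¹ (i + 1)) :
    nInv n (A * (sw i * B)) = nInv n A + nInv n B + 1 := by
  have hN := (additive_iff A B hB).1 hadd
  have hadd2 : nInv n (A * (sw i * B)) = nInv n A + nInv n (sw i * B) := by
    apply (additive_iff A (sw i * B) ((Sup.sw h1 h2).mul hB)).2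
    intro p hp hX
    obtain ⟨hpa, hpb, hpab⟩ := mem_P.1 hp
    have hBne : B p.1 ≠ B p.2 := apply_ne B (by omega)
    simp only [Equiv.Perm.mul_apply] at hX ⊢
    by_cases hu : B p.1 = i
    · rw [hu, Equiv.swap_apply_left] at hX ⊢
      by_cases hv : B p.2 = i + 1
      · rw [hv, Equiv.swap_apply_right] at hX ⊢
        exact hAasc
      · have hvi : B p.2 ≠ i := fun h => hBne (by rw [hu, h])
        rw [Equiv.swap_apply_of_ne_of_ne hvi hv] at hX ⊢
        have h4 := hN p hp (by omega)
        rw [hu] at h4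
        exact lt_trans h4 hAasc
    · by_cases hu' : B p.1 = i + 1
      · rw [hu', Equiv.swap_apply_right] at hX ⊢
        by_cases hv : B p.2 = i
        · rw [hv, Equiv.swap_apply_left] at hX
          omega
        · have hvi' : B p.2 ≠ i + 1 := fun h => hBne (by rw [hu', h])
          rw [Equiv.swap_apply_of_ne_of_ne hv hvi'] at hX ⊢
          have ha : p.1 = B⁻¹ (i + 1) := (Equiv.Perm.eq_inv_iff_eq).2 hu'
          have hq : ((B⁻¹ i, p.2) : ℕ × ℕ) ∈ P n :=
            mem_P.2 ⟨hB.inv_apply_le (by omega), hpb, by omega⟩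
          have h4 := hN _ hq (by
            simp only [Equiv.Perm.apply_inv_self]
            omega)
          simpa [Equiv.Perm.apply_inv_self] using h4
      · rw [Equiv.swap_apply_of_ne_of_ne hu hu'] at hX ⊢
        by_cases hv : B p.2 = i
        · rw [hv, Equiv.swap_apply_left] at hX ⊢
          have hb : p.2 = B⁻¹ i := (Equiv.Perm.eq_inv_iff_eq).2 hv
          have hq : ((p.1, B⁻¹ (i + 1)) : ℕ × ℕ) ∈ P n :=
            mem_P.2 ⟨hpa, hB.inv_apply_le (by omega), by omega⟩
          have h4 := hN _ hq (by
            simp only [Equiv.Perm.apply_inv_self]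
            omega)
          simpa [Equiv.Perm.apply_inv_self] using h4
        · by_cases hv' : B p.2 = i + 1
          · rw [hv', Equiv.swap_apply_right] at hX ⊢
            have h4 := hN p hp (by omega)
            rw [hv'] at h4
            exact lt_trans hAasc h4
          · rw [Equiv.swap_apply_of_ne_of_ne hv hv'] at hX ⊢
            exact hN p hp hX
  rw [hadd2, L_asc B hB i h1 h2 hBasc]
  omega

/-- Direction 2: if lengths do not add, the product vanishes. -/
theorem prod_bar_eq_zero : ∀ w₂ w₁ : List (HIdx n),
    w₁.length = nInv n (wordPerm n w₁) →
    w₂.length = nInv n (wordPerm n w₂) →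
    nInv n (wordPerm n w₁ * wordPerm n w₂) < w₁.length + w₂.length →
    piw n w₁ * (w₂.map (piBar n)).prod = 0 := by
  intro w₂
  induction w₂ with
  | nil =>
    intro w₁ h1 h2 hlt
    rw [wordPerm_nil, mul_one] at hlt
    simp only [List.length_nil] at hlt
    omega
  | cons i w₂' ih =>
    intro w₁ h1 h2 hlt
    obtain ⟨h2', hstep⟩ := red_cons h2
    have hmap : (List.map (piBar n) (i :: w₂')).prod
        = piBar n i * (List.map (piBar n) w₂').prod := by simp
    have hSσ := Sup_wordPerm (n := n) w₁
    have hSρ' := Sup_wordPerm (n := n) w₂'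
    rcases Nat.lt_or_ge ((wordPerm n w₁) i.1) ((wordPerm n w₁) (i.1 + 1)) with hasc | hdesc'
    · -- ascent case
      have hBasc : (wordPerm n w₂')⁻¹ i.1 < (wordPerm n w₂')⁻¹ (i.1 + 1) := by
        rw [wordPerm_cons] at hstep
        exact (L_asc_iff _ hSρ' i.1 i.2.1 i.2.2).1 hstep
      have hred1 : (w₁ ++ [i]).length = nInv n (wordPerm n (w₁ ++ [i])) := by
        rw [wordPerm_append, wordPerm_single, R_asc _ i.1 i.2.1 i.2.2 hasc]
        simp only [List.length_append, List.length_singleton]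
        omega
    -- term 1 vanishes
      have ht1 : piw n (w₁ ++ [i]) * (w₂'.map (piBar n)).prod = 0 := by
        apply ih (w₁ ++ [i]) hred1 h2'
        have he : wordPerm n (w₁ ++ [i]) * wordPerm n w₂'
            = wordPerm n w₁ * wordPerm n (i :: w₂') := by
          rw [wordPerm_append, wordPerm_single, wordPerm_cons, mul_assoc]
        rw [he]
        simp only [List.length_append, List.length_singleton]
        simp only [List.length_cons] at hlt
        omega
      -- term 2 vanishes
      have ht2 : piw n w₁ * (w₂'.map (piBar n)).prod = 0 := by
        apply ih w₁ h1 h2'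
        by_contra hge
        have hle := nInv_mul_le (wordPerm n w₁) (wordPerm n w₂') hSρ'
        have heq : nInv n (wordPerm n w₁ * wordPerm n w₂')
            = nInv n (wordPerm n w₁) + nInv n (wordPerm n w₂') := by omega
        have hlift := lift_lemma (wordPerm n w₁) (wordPerm n w₂') hSσ hSρ'
          i.1 i.2.1 i.2.2 heq hasc hBasc
        rw [← wordPerm_cons] at hlift
        simp only [List.length_cons] at hlt
        omega
      rw [hmap, ← mul_assoc, piBar, mul_sub, mul_one, sub_mul]
      rw [show piw n w₁ * piGen n i = piw n (w₁ ++ [i]) by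
        rw [piw_append, piw_single]]
      rw [ht1, ht2, sub_zero]
    · -- descent case
      have hne : (wordPerm n w₁) i.1 ≠ (wordPerm n w₁) (i.1 + 1) :=
        apply_ne _ (by omega)
      have habs : piw n w₁ * piGen n i = piw n w₁ := piw_absorb h1 (by omega)
      rw [hmap, ← mul_assoc, piBar, mul_sub, mul_one, habs, sub_self, zero_mul]

end S10
namespace S10
open Finset Equiv

variable {n : ℕ}

/-- the bubble-sorting action of `π_i` on permutations -/
def tAct (i : ℕ) (σ : Equiv.Perm ℕ) : Equiv.Perm ℕ :=
  if σ⁻¹ i < σ⁻¹ (i+1) then sw i * σ else σ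

lemma tAct_pos {i : ℕ} {σ : Equiv.Perm ℕ} (h : σ⁻¹ i < σ⁻¹ (i+1)) :
    tAct i σ = sw i * σ := if_pos h

lemma tAct_neg {i : ℕ} {σ : Equiv.Perm ℕ} (h : ¬ σ⁻¹ i < σ⁻¹ (i+1)) :
    tAct i σ = σ := if_neg h

lemma sw_at_lo (i : ℕ) : sw i i = i + 1 := Equiv.swap_apply_left _ _
lemma sw_at_hi (i : ℕ) : sw i (i+1) = i := Equiv.swap_apply_right _ _
lemma sw_at_out {i x : ℕ} (h1 : x ≠ i) (h2 : x ≠ i+1) : sw i x = x :=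
  Equiv.swap_apply_of_ne_of_ne h1 h2

lemma tAct_idem (i : ℕ) (σ : Equiv.Perm ℕ) : tAct i (tAct i σ) = tAct i σ := by
  by_cases h : σ⁻¹ i < σ⁻¹ (i+1)
  · rw [tAct_pos h]
    apply tAct_neg
    rw [sw_mul_inv_apply, sw_mul_inv_apply, sw_at_lo, sw_at_hi]
    omega
  · rw [tAct_neg h]; exact tAct_neg h

lemma tAct_comm {i j : ℕ} (hij : i + 2 ≤ j) (σ : Equiv.Perm ℕ) :
    tAct i (tAct j σ) = tAct j (tAct i σ) := by
  have g1 : ∀ τ : Equiv.Perm ℕ, (sw j * τ)⁻¹ i = τ⁻¹ i := fun τ => by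
    rw [sw_mul_inv_apply, sw_at_out (by omega) (by omega)]
  have g2 : ∀ τ : Equiv.Perm ℕ, (sw j * τ)⁻¹ (i+1) = τ⁻¹ (i+1) := fun τ => by
    rw [sw_mul_inv_apply, sw_at_out (by omega) (by omega)]
  have g3 : ∀ τ : Equiv.Perm ℕ, (sw i * τ)⁻¹ j = τ⁻¹ j := fun τ => by
    rw [sw_mul_inv_apply, sw_at_out (by omega) (by omega)]
  have g4 : ∀ τ : Equiv.Perm ℕ, (sw i * τ)⁻¹ (j+1) = τ⁻¹ (j+1) := fun τ => by
    rw [sw_mul_inv_apply, sw_at_out (by omega) (by omega)]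
  by_cases ci : σ⁻¹ i < σ⁻¹ (i+1) <;> by_cases cj : σ⁻¹ j < σ⁻¹ (j+1)
  · rw [tAct_pos cj, tAct_pos (by rw [g1, g2]; exact ci), tAct_pos ci,
      tAct_pos (by rw [g3, g4]; exact cj), ← mul_assoc, ← mul_assoc, sw_comm hij]
  · rw [tAct_neg cj, tAct_pos ci, tAct_neg (by rw [g3, g4]; exact cj)]
  · rw [tAct_pos cj, tAct_neg (by rw [g1, g2]; exact ci), tAct_neg ci, tAct_pos cj]
  · rw [tAct_neg cj, tAct_neg ci, tAct_neg cj]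

lemma sw_braid_apply (i : ℕ) (σ : Equiv.Perm ℕ) :
    sw i * (sw (i+1) * (sw i * σ)) = sw (i+1) * (sw i * (sw (i+1) * σ)) := by
  have h := congrArg (fun g => g * σ) (sw_braid i)
  simpa [mul_assoc] using h

lemma tAct_braid (i : ℕ) (σ : Equiv.Perm ℕ) :
    tAct i (tAct (i+1) (tAct i σ)) = tAct (i+1) (tAct i (tAct (i+1) σ)) := by
  have hab' : σ⁻¹ i ≠ σ⁻¹ (i+1) := apply_ne _ (by omega)
  have hbc' : σ⁻¹ (i+1) ≠ σ⁻¹ (i+1+1) := apply_ne _ (by omega)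
  have hac' : σ⁻¹ i ≠ σ⁻¹ (i+1+1) := apply_ne _ (by omega)
  have hX1 : (sw i * σ)⁻¹ (i+1) = σ⁻¹ i := by
    rw [sw_mul_inv_apply, show sw i (i+1) = i from sw_at_hi i]
  have hX2 : (sw i * σ)⁻¹ (i+1+1) = σ⁻¹ (i+1+1) := by
    rw [sw_mul_inv_apply, show sw i (i+1+1) = i+1+1 from sw_at_out (by omega) (by omega)]
  have hX3 : (sw i * σ)⁻¹ i = σ⁻¹ (i+1) := by
    rw [sw_mul_inv_apply, show sw i i = i+1 from sw_at_lo i]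
  have hY1 : (sw (i+1) * σ)⁻¹ i = σ⁻¹ i := by
    rw [sw_mul_inv_apply, show sw (i+1) i = i from sw_at_out (by omega) (by omega)]
  have hY2 : (sw (i+1) * σ)⁻¹ (i+1) = σ⁻¹ (i+1+1) := by
    rw [sw_mul_inv_apply, show sw (i+1) (i+1) = i+1+1 from sw_at_lo (i+1)]
  have hY3 : (sw (i+1) * σ)⁻¹ (i+1+1) = σ⁻¹ (i+1) := by
    rw [sw_mul_inv_apply, show sw (i+1) (i+1+1) = i+1 from sw_at_hi (i+1)]
  have hYX1 : (sw (i+1) * (sw i * σ))⁻¹ i = σ⁻¹ (i+1) := by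
    rw [sw_mul_inv_apply, show sw (i+1) i = i from sw_at_out (by omega) (by omega), hX3]
  have hYX2 : (sw (i+1) * (sw i * σ))⁻¹ (i+1) = σ⁻¹ (i+1+1) := by
    rw [sw_mul_inv_apply, show sw (i+1) (i+1) = i+1+1 from sw_at_lo (i+1), hX2]
  have hXY1 : (sw i * (sw (i+1) * σ))⁻¹ (i+1) = σ⁻¹ i := by
    rw [sw_mul_inv_apply, show sw i (i+1) = i from sw_at_hi i, hY1]
  have hXY2 : (sw i * (sw (i+1) * σ))⁻¹ (i+1+1) = σ⁻¹ (i+1) := by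
    rw [sw_mul_inv_apply, show sw i (i+1+1) = i+1+1 from sw_at_out (by omega) (by omega), hY3]
  by_cases ci : σ⁻¹ i < σ⁻¹ (i+1) <;> by_cases cj : σ⁻¹ (i+1) < σ⁻¹ (i+1+1)
  · -- a < b < c
    rw [tAct_pos ci, tAct_pos (show (sw i * σ)⁻¹ (i+1) < (sw i * σ)⁻¹ (i+1+1) by
        rw [hX1, hX2]; omega),
      tAct_pos (show (sw (i+1) * (sw i * σ))⁻¹ i < (sw (i+1) * (sw i * σ))⁻¹ (i+1) by
        rw [hYX1, hYX2]; omega),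
      tAct_pos cj, tAct_pos (show (sw (i+1) * σ)⁻¹ i < (sw (i+1) * σ)⁻¹ (i+1) by
        rw [hY1, hY2]; omega),
      tAct_pos (show (sw i * (sw (i+1) * σ))⁻¹ (i+1) < (sw i * (sw (i+1) * σ))⁻¹ (i+1+1) by
        rw [hXY1, hXY2]; omega)]
    exact sw_braid_apply i σ
  · -- a < b, c < b
    by_cases cac : σ⁻¹ i < σ⁻¹ (i+1+1)
    · -- a < c < b
      rw [tAct_pos ci, tAct_pos (show (sw i * σ)⁻¹ (i+1) < (sw i * σ)⁻¹ (i+1+1) by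
          rw [hX1, hX2]; omega),
        tAct_neg (show ¬ (sw (i+1) * (sw i * σ))⁻¹ i < (sw (i+1) * (sw i * σ))⁻¹ (i+1) by
          rw [hYX1, hYX2]; omega),
        tAct_neg cj, tAct_pos ci,
        tAct_pos (show (sw i * σ)⁻¹ (i+1) < (sw i * σ)⁻¹ (i+1+1) by
          rw [hX1, hX2]; omega)]
    · -- c < a < b
      rw [tAct_pos ci, tAct_neg (show ¬ (sw i * σ)⁻¹ (i+1) < (sw i * σ)⁻¹ (i+1+1) by
          rw [hX1, hX2]; omega),
        tAct_neg (show ¬ (sw i * σ)⁻¹ i < (sw i * σ)⁻¹ (i+1) by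
          rw [hX3, hX1]; omega),
        tAct_neg cj, tAct_pos ci,
        tAct_neg (show ¬ (sw i * σ)⁻¹ (i+1) < (sw i * σ)⁻¹ (i+1+1) by
          rw [hX1, hX2]; omega)]
  · -- b < a, b < c
    by_cases cac : σ⁻¹ i < σ⁻¹ (i+1+1)
    · -- b < a < c
      rw [tAct_neg ci, tAct_pos cj,
        tAct_pos (show (sw (i+1) * σ)⁻¹ i < (sw (i+1) * σ)⁻¹ (i+1) by
          rw [hY1, hY2]; omega),
        tAct_neg (show ¬ (sw i * (sw (i+1) * σ))⁻¹ (i+1) < (sw i * (sw (i+1) * σ))⁻¹ (i+1+1) by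
          rw [hXY1, hXY2]; omega)]
    · -- b < c < a
      rw [tAct_neg ci, tAct_pos cj,
        tAct_neg (show ¬ (sw (i+1) * σ)⁻¹ i < (sw (i+1) * σ)⁻¹ (i+1) by
          rw [hY1, hY2]; omega),
        tAct_neg (show ¬ (sw (i+1) * σ)⁻¹ (i+1) < (sw (i+1) * σ)⁻¹ (i+1+1) by
          rw [hY2, hY3]; omega)]
  · -- c < b < a
    rw [tAct_neg ci, tAct_neg cj, tAct_neg ci, tAct_neg cj]

end S10
namespace S10
open Finset Equiv

variable {n : ℕ}

abbrev V : Type := Equiv.Perm ℕ →₀ ℂ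

noncomputable def T (n : ℕ) (i : HIdx n) : V →ₗ[ℂ] V :=
  Finsupp.lift V ℂ (Equiv.Perm ℕ) (fun σ => Finsupp.single (tAct i.1 σ) 1)

lemma T_single (i : HIdx n) (σ : Equiv.Perm ℕ) (c : ℂ) :
    T n i (Finsupp.single σ c) = Finsupp.single (tAct i.1 σ) c := by
  classical
  rw [T, Finsupp.lift_apply, Finsupp.sum_single_index (by simp)]
  rw [Finsupp.smul_single, smul_eq_mul, mul_one]

lemma T_apply (i : HIdx n) (g : V) :
    T n i g = g.sum fun σ c => Finsupp.single (tAct i.1 σ) c := by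
  classical
  rw [T, Finsupp.lift_apply]
  apply Finsupp.sum_congr
  intro σ _
  rw [Finsupp.smul_single, smul_eq_mul, mul_one]

noncomputable def rep (n : ℕ) : Hecke0 n →ₐ[ℂ] Module.End ℂ V :=
  RingQuot.liftAlgHom ℂ ⟨FreeAlgebra.lift ℂ (fun i => T n i), by
    intro x y h
    cases h with
    | idem i =>
      simp only [map_mul, FreeAlgebra.lift_ι_apply]
      refine Finsupp.lhom_ext fun σ c => ?_
      show T n i (T n i (Finsupp.single σ c)) = T n i (Finsupp.single σ c)
      simp only [T_single, tAct_idem]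
    | braid i j hij =>
      simp only [map_mul, FreeAlgebra.lift_ι_apply]
      refine Finsupp.lhom_ext fun σ c => ?_
      show T n i (T n j (T n i (Finsupp.single σ c)))
          = T n j (T n i (T n j (Finsupp.single σ c)))
      simp only [T_single]
      exact congrArg (fun τ => Finsupp.single τ c) (by rw [← hij]; exact tAct_braid i.1 σ)
    | comm i j hij =>
      simp only [map_mul, FreeAlgebra.lift_ι_apply]
      refine Finsupp.lhom_ext fun σ c => ?_
      show T n i (T n j (Finsupp.single σ c)) = T n j (T n i (Finsupp.single σ c))
      simp only [T_single]
      exact congrArg (fun τ => Finsupp.single τ c) (tAct_comm hij σ)⟩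

lemma rep_piGen (i : HIdx n) : rep n (piGen n i) = T n i := by
  rw [rep, piGen, RingQuot.liftAlgHom_mkAlgHom_apply, FreeAlgebra.lift_ι_apply]

noncomputable def actP : List (HIdx n) → V → V
  | [], f => f
  | i :: w, f => T n i (actP w f)

noncomputable def actB : List (HIdx n) → V → V
  | [], f => f
  | i :: w, f => T n i (actB w f) - actB w f

lemma rep_piw_apply (w : List (HIdx n)) (f : V) : rep n (piw n w) f = actP w f := by
  induction w with
  | nil => rw [piw_nil, map_one]; rfl
  | cons i w ih =>
    rw [piw_cons, map_mul]
    show rep n (piGen n i) (rep n (piw n w) f) = _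
    rw [ih, rep_piGen]
    rfl

lemma rep_barprod_apply (w : List (HIdx n)) (f : V) :
    rep n ((w.map (piBar n)).prod) f = actB w f := by
  induction w with
  | nil => simp only [List.map_nil, List.prod_nil, map_one]; rfl
  | cons i w ih =>
    simp only [List.map_cons, List.prod_cons, map_mul]
    show rep n (piBar n i) (rep n ((w.map (piBar n)).prod) f) = _
    rw [ih, piBar, map_sub, map_one, rep_piGen]
    show T n i (actB w f) - (1 : Module.End ℂ V) (actB w f) = _
    rfl

end S10
namespace S10
open Finset Equiv

variable {n : ℕ}

noncomputable local instance : DecidableEq (Equiv.Perm ℕ) := Classical.decEq _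

lemma tAct_Sup {i : HIdx n} {τ : Equiv.Perm ℕ} (h : Sup n τ) : Sup n (tAct i.1 τ) := by
  unfold tAct
  split_ifs
  · exact (Sup.sw i.2.1 i.2.2).mul h
  · exact h

lemma tAct_nInv_le {i : HIdx n} {τ : Equiv.Perm ℕ} (h : Sup n τ) :
    nInv n (tAct i.1 τ) ≤ nInv n τ + 1 := by
  unfold tAct
  split_ifs
  · have := nInv_sw_mul τ h i.1 i.2.1 i.2.2
    split_ifs at this <;> omega
  · omega

lemma T_support (i : HIdx n) (g : V) :
    (T n i g).support ⊆ g.support.image (fun τ => tAct i.1 τ) := by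
  classical
  rw [T_apply]
  intro τ hτ
  have h1 := Finsupp.support_sum hτ
  obtain ⟨σ, hσ, hmem⟩ := Finset.mem_biUnion.1 h1
  have h2 := Finsupp.support_single_subset hmem
  rw [Finset.mem_singleton] at h2
  exact Finset.mem_image.2 ⟨σ, hσ, h2.symm⟩

lemma T_coeff (i : HIdx n) (g : V) (τ₀ : Equiv.Perm ℕ) :
    (T n i g) τ₀ = ∑ σ ∈ g.support, if tAct i.1 σ = τ₀ then g σ else 0 := by
  classical
  rw [T_apply, Finsupp.sum_apply, Finsupp.sum]
  apply Finset.sum_congr rfl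
  intro σ _
  exact Finsupp.single_apply

lemma actP_zero (w : List (HIdx n)) : actP w (0 : V) = 0 := by
  induction w with
  | nil => rfl
  | cons i w ih => show T n i (actP w 0) = 0; rw [ih, map_zero]

lemma actP_add (w : List (HIdx n)) (f g : V) :
    actP w (f + g) = actP w f + actP w g := by
  induction w with
  | nil => rfl
  | cons i w ih => show T n i (actP w (f + g)) = _; rw [ih, map_add]; rfl

lemma actP_bound (m : ℕ) (w : List (HIdx n)) : ∀ (f : V),
    (∀ τ ∈ f.support, Sup n τ ∧ nInv n τ ≤ m) →
    ∀ τ ∈ (actP w f).support, Sup n τ ∧ nInv n τ ≤ m + w.length := by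
  induction w with
  | nil =>
    intro f hf τ hτ
    have := hf τ hτ
    exact ⟨this.1, by simpa using this.2⟩
  | cons i w ih =>
    intro f hf τ hτ
    have hs := T_support i (actP w f) hτ
    obtain ⟨τ', hτ', he⟩ := Finset.mem_image.1 hs
    have h2 := ih f hf τ' hτ'
    refine ⟨he ▸ tAct_Sup h2.1, ?_⟩
    have h3 := tAct_nInv_le (i := i) h2.1
    rw [he] at h3
    simp only [List.length_cons]
    omega

lemma actB_spec : ∀ w : List (HIdx n), w.length = nInv n (wordPerm n w) →
    (actB w (Finsupp.single 1 1)) (wordPerm n w) = 1 ∧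
    ∀ τ ∈ (actB w (Finsupp.single 1 1)).support,
      Sup n τ ∧ nInv n τ ≤ w.length ∧ (nInv n τ = w.length → τ = wordPerm n w) := by
  intro w
  induction w with
  | nil =>
    intro _
    constructor
    · rw [wordPerm_nil]; exact Finsupp.single_eq_same
    · intro τ hτ
      have h1 : τ = 1 := by
        have := Finsupp.support_single_subset hτ
        simpa using this
      subst h1
      exact ⟨Sup.one n, by simp [nInv_one], fun _ => by rw [wordPerm_nil]⟩
  | cons i w ih =>
    intro hred
    obtain ⟨hred', hstep⟩ := red_cons hred
    obtain ⟨ih1, ih2⟩ := ih hred'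
    have hSt : Sup n (wordPerm n w) := Sup_wordPerm w
    have hasc : (wordPerm n w)⁻¹ i.1 < (wordPerm n w)⁻¹ (i.1+1) := by
      rw [wordPerm_cons] at hstep
      exact (L_asc_iff _ hSt i.1 i.2.1 i.2.2).1 hstep
    have htop : tAct i.1 (wordPerm n w) = wordPerm n (i :: w) := by
      rw [tAct_pos hasc, wordPerm_cons]
    have hσlen : nInv n (wordPerm n (i :: w)) = w.length + 1 := by
      rw [← hred]; simp
    have hact : actB (i :: w) (Finsupp.single 1 1)
        = T n i (actB w (Finsupp.single 1 1)) - actB w (Finsupp.single 1 1) := rfl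
    constructor
    · rw [hact, Finsupp.sub_apply]
      have hF0 : (actB w (Finsupp.single 1 1)) (wordPerm n (i :: w)) = 0 := by
        by_contra h0
        have hmem := Finsupp.mem_support_iff.2 h0
        have := (ih2 _ hmem).2.1
        omega
      have hmem : wordPerm n w ∈ (actB w (Finsupp.single 1 1)).support := by
        rw [Finsupp.mem_support_iff, ih1]; exact one_ne_zero
      have hothers : ∀ σ' ∈ (actB w (Finsupp.single 1 1)).support, σ' ≠ wordPerm n w →
          (if tAct i.1 σ' = wordPerm n (i :: w)
            then (actB w (Finsupp.single 1 1)) σ' else 0) = 0 := by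
        intro σ' hσ' hne
        have hneq : tAct i.1 σ' ≠ wordPerm n (i :: w) := by
          by_cases hc : σ'⁻¹ i.1 < σ'⁻¹ (i.1+1)
          · rw [tAct_pos hc]
            intro heq
            exact hne (mul_left_cancel (show sw i.1 * σ' = sw i.1 * wordPerm n w by
              rw [heq, wordPerm_cons]))
          · rw [tAct_neg hc]
            intro heq
            have h5 := (ih2 _ hσ').2.1
            rw [heq] at h5
            omega
        rw [if_neg hneq]
      rw [hF0, sub_zero, T_coeff,
        Finset.sum_eq_single_of_mem (wordPerm n w) hmem hothers, if_pos htop, ih1]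
    · intro τ hτ
      rw [hact] at hτ
      have hmem := Finsupp.support_sub hτ
      rcases Finset.mem_union.1 hmem with hl | hr
      · have hs := T_support i _ hl
        obtain ⟨τ', hτ', he⟩ := Finset.mem_image.1 hs
        obtain ⟨hS', hle', htopc⟩ := ih2 τ' hτ'
        refine ⟨he ▸ tAct_Sup hS', ?_, ?_⟩
        · have h3 := tAct_nInv_le (i := i) hS'
          rw [he] at h3
          simp only [List.length_cons]
          omega
        · intro hmax
          simp only [List.length_cons] at hmax
          have h3 := tAct_nInv_le (i := i) hS'
          rw [he] at h3
          have h4 : nInv n τ' = w.length := by omega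
          have h5 := htopc h4
          rw [← he, h5, htop]
      · obtain ⟨hS', hle', _⟩ := ih2 τ hr
        refine ⟨hS', by simp only [List.length_cons]; omega, fun h => ?_⟩
        simp only [List.length_cons] at h
        omega

lemma actP_single_red : ∀ (w : List (HIdx n)) (ρ : Equiv.Perm ℕ), Sup n ρ →
    nInv n (wordPerm n w * ρ) = w.length + nInv n ρ →
    actP w (Finsupp.single ρ 1) = Finsupp.single (wordPerm n w * ρ) 1 := by
  intro w
  induction w with
  | nil =>
    intro ρ _ _
    rw [wordPerm_nil, one_mul]
    rfl
  | cons i w ih =>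
    intro ρ hρ hadd
    have hSt : Sup n (wordPerm n w * ρ) := (Sup_wordPerm w).mul hρ
    have h1 : nInv n (wordPerm n w * ρ) ≤ w.length + nInv n ρ := by
      have h1a := nInv_mul_le (wordPerm n w) ρ hρ
      have h1b := nInv_wordPerm_le w
      omega
    have h2 : nInv n (sw i.1 * (wordPerm n w * ρ)) ≤ nInv n (wordPerm n w * ρ) + 1 := by
      have := nInv_sw_mul (wordPerm n w * ρ) hSt i.1 i.2.1 i.2.2
      split_ifs at this <;> omega
    have hcons : wordPerm n (i :: w) * ρ = sw i.1 * (wordPerm n w * ρ) := by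
      rw [wordPerm_cons, mul_assoc]
    rw [hcons] at hadd
    simp only [List.length_cons] at hadd
    have h3 : nInv n (wordPerm n w * ρ) = w.length + nInv n ρ := by omega
    have h4 : nInv n (sw i.1 * (wordPerm n w * ρ)) = nInv n (wordPerm n w * ρ) + 1 := by
      omega
    have hasc := (L_asc_iff _ hSt i.1 i.2.1 i.2.2).1 h4
    show T n i (actP w (Finsupp.single ρ 1)) = _
    rw [ih ρ hρ h3, T_single, tAct_pos hasc, hcons]

theorem prod_bar_ne_zero (w₁ w₂ : List (HIdx n))
    (h1 : w₁.length = nInv n (wordPerm n w₁))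
    (h2 : w₂.length = nInv n (wordPerm n w₂))
    (hadd : nInv n (wordPerm n w₁ * wordPerm n w₂) = w₁.length + w₂.length) :
    piw n w₁ * (w₂.map (piBar n)).prod ≠ 0 := by
  classical
  intro h0
  obtain ⟨c1, c2⟩ := actB_spec w₂ h2
  have e1 : rep n (piw n w₁ * (w₂.map (piBar n)).prod) (Finsupp.single 1 1)
      = actP w₁ (actB w₂ (Finsupp.single 1 1)) := by
    rw [map_mul]
    show rep n (piw n w₁) (rep n ((w₂.map (piBar n)).prod) (Finsupp.single 1 1)) = _
    rw [rep_barprod_apply, rep_piw_apply]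
  have e2 : actP w₁ (actB w₂ (Finsupp.single 1 1)) = 0 := by
    rw [← e1, h0, map_zero]
    rfl
  set G := actB w₂ (Finsupp.single 1 1) - Finsupp.single (wordPerm n w₂) 1 with hG
  have hFdec : actB w₂ (Finsupp.single 1 1) = Finsupp.single (wordPerm n w₂) 1 + G := by
    rw [hG]; abel
  have hGsup : ∀ τ ∈ G.support, Sup n τ ∧ nInv n τ + 1 ≤ w₂.length := by
    intro τ hτ
    have hne : τ ≠ wordPerm n w₂ := by
      intro he
      have hz : G τ = 0 := by
        rw [hG, Finsupp.sub_apply, he, c1, Finsupp.single_eq_same, sub_self]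
      exact Finsupp.mem_support_iff.1 hτ hz
    have hFτ : (actB w₂ (Finsupp.single 1 1)) τ ≠ 0 := by
      have hGτ := Finsupp.mem_support_iff.1 hτ
      rw [hG, Finsupp.sub_apply, Finsupp.single_apply, if_neg (Ne.symm hne), sub_zero] at hGτ
      exact hGτ
    obtain ⟨hS, hle, htopc⟩ := c2 τ (Finsupp.mem_support_iff.2 hFτ)
    refine ⟨hS, ?_⟩
    by_cases he : nInv n τ = w₂.length
    · exact absurd (htopc he) hne
    · omega
  have hcoeff1 : (actP w₁ (Finsupp.single (wordPerm n w₂) 1)) (wordPerm n w₁ * wordPerm n w₂) = 1 := by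
    rw [actP_single_red w₁ (wordPerm n w₂) (Sup_wordPerm w₂) (by rw [hadd, h2])]
    exact Finsupp.single_eq_same
  have hcoeff2 : (actP w₁ G) (wordPerm n w₁ * wordPerm n w₂) = 0 := by
    apply Finsupp.notMem_support_iff.1
    intro hmem
    rcases Nat.eq_zero_or_pos w₂.length with hz | hpos
    · have hGz : G = 0 := by
        rw [← Finsupp.support_eq_empty, Finset.eq_empty_iff_forall_notMem]
        intro τ hτ
        have := (hGsup τ hτ).2
        omega
      rw [hGz, actP_zero] at hmem
      simp at hmem
    · have hb := actP_bound (w₂.length - 1) w₁ G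
        (fun τ hτ => ⟨(hGsup τ hτ).1, by have := (hGsup τ hτ).2; omega⟩) _ hmem
      omega
  have hfin : (actP w₁ (actB w₂ (Finsupp.single 1 1))) (wordPerm n w₁ * wordPerm n w₂) = 1 := by
    rw [hFdec, actP_add, Finsupp.add_apply, hcoeff1, hcoeff2, add_zero]
  rw [e2] at hfin
  simp at hfin

end S10
/-- `π_σ · π̄_ρ ≠ 0` iff `ℓ(σρ) = ℓ(σ) + ℓ(ρ)`.  Here `π_σ`
(resp. `π̄_ρ`) is the product of the `π_i` (resp. `π̄_i`) along a reduced
expression `w₁` of `σ` (resp. `w₂` of `ρ`), and the length condition is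
expressed via a reduced expression `w₃` of `σρ`. -/
theorem stmt10 (n : ℕ) (σ ρ : Equiv.Perm ℕ) (w₁ w₂ w₃ : List (HIdx n))
    (h₁ : IsRedWord n σ w₁) (h₂ : IsRedWord n ρ w₂) (h₃ : IsRedWord n (σ * ρ) w₃) :
    (w₁.map (piGen n)).prod * (w₂.map (piBar n)).prod ≠ 0 ↔
      w₃.length = w₁.length + w₂.length := by
  rw [S10.isRedWord_iff] at h₁ h₂ h₃
  obtain ⟨e1, l1⟩ := h₁
  obtain ⟨e2, l2⟩ := h₂
  obtain ⟨e3, l3⟩ := h₃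
  constructor
  · intro hne
    by_contra hneq
    have hle : S10.nInv n (σ * ρ) ≤ S10.nInv n σ + S10.nInv n ρ := by
      have := S10.nInv_mul_le (n := n) σ ρ (e2 ▸ S10.Sup_wordPerm w₂)
      exact this
    have hlt : S10.nInv n (wordPerm n w₁ * wordPerm n w₂) < w₁.length + w₂.length := by
      rw [e1, e2]
      omega
    exact hne (S10.prod_bar_eq_zero w₂ w₁ (by rw [e1]; exact l1) (by rw [e2]; exact l2) hlt)
  · intro heq
    have := S10.prod_bar_ne_zero w₁ w₂ (by rw [e1]; exact l1) (by rw [e2]; exact l2)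
      (by rw [e1, e2]; omega)
    exact this
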